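/- Let F be a finitely generated free group and let m ≥ 1. Since γ_{m-1}(F/γ_m(F)) = γ_{m-1}(F)/γ_m(F) and lower central subgroups are characteristic, the identification F/γ_{m-1}(F) ≅ (F/γ_m(F))/γ_{m-1}(F/γ_m(F)) induces a natural group homomorphism Aut(F/γ_m(F)) → Aut(F/γ_{m-1}(F)). This homomorphism is surjective: every automorphism of F/γ_{m-1}(F) lifts to an automorphism of F/γ_m(F). -/

import Mathlib

open scoped commutatorElement

/-- A surjective image of a lower central series term is the corresponding term. -/
private lemma lcs_map_eq {G H : Type*} [Group G] [Group H] (f : G →* H)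
    (hf : Function.Surjective f) (n : ℕ) :
    Subgroup.map f (Subgroup.lowerCentralSeries (⊤ : Subgroup G) n) = Subgroup.lowerCentralSeries (⊤ : Subgroup H) n := by
  induction n with
  | zero =>
      simpa [Subgroup.lowerCentralSeries_zero] using Subgroup.map_top_of_surjective f hf
  | succ n ih =>
      show Subgroup.map f ⁅Subgroup.lowerCentralSeries (⊤ : Subgroup G) n, ⊤⁆ = ⁅Subgroup.lowerCentralSeries (⊤ : Subgroup H) n, ⊤⁆
      rw [Subgroup.map_commutator, ih, Subgroup.map_top_of_surjective f hf]

/-- An endomorphism `σ` with `π ∘ σ = π`, where `ker π` is central and contained in the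
commutator subgroup, is bijective. -/
private lemma sigma_bijective {G Q : Type*} [Group G] [Group Q] (π : G →* Q) (σ : G →* G)
    (hσ : ∀ x, π (σ x) = π x)
    (hcent : ∀ k : G, π k = 1 → ∀ g : G, Commute k g)
    (hker : ∀ k : G, π k = 1 → k ∈ commutator G) :
    Function.Bijective σ := by
  set c : G → G := fun x => x⁻¹ * σ x with hc
  have hπc : ∀ x, π (c x) = 1 := by
    intro x; simp [hc, hσ x]
  have hcomm : ∀ x g : G, Commute (c x) g := fun x g => hcent _ (hπc x) g
  have hmul : ∀ x y : G, c (x * y) = c x * c y := by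
    intro x y
    have h : c x * y⁻¹ = y⁻¹ * c x := (hcomm x y⁻¹).eq
    calc c (x * y) = y⁻¹ * (c x) * σ y := by
          simp only [hc, map_mul, mul_inv_rev]; group
      _ = c x * y⁻¹ * σ y := by rw [← h]
      _ = c x * c y := by simp only [hc]; group
  set C : G →* G := { toFun := c, map_one' := by simp [hc], map_mul' := hmul } with hC
  have hCcomm : commutator G ≤ C.ker := by
    rw [commutator_def, Subgroup.commutator_le]
    intro g₁ _ g₂ _
    rw [MonoidHom.mem_ker, map_commutatorElement]
    exact commutatorElement_eq_one_iff_commute.mpr (hcomm g₁ (C g₂))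
  have hCapp : ∀ x, C x = c x := fun _ => rfl
  have hck : ∀ k : G, π k = 1 → c k = 1 := fun k hk => (hCapp k).symm.trans (hCcomm (hker k hk))
  have hσx : ∀ x, σ x = x * c x := by intro x; simp [hc]
  have hcσ : ∀ x, c (σ x) = c x := by
    intro x
    rw [hσx x]
    show C (x * c x) = c x
    rw [map_mul, hCapp, hCapp, hck (c x) (hπc x), mul_one]
  refine Function.bijective_iff_has_inverse.mpr ⟨fun x => x * (c x)⁻¹, ?_, ?_⟩
  · intro x
    show σ x * (c (σ x))⁻¹ = x
    rw [hcσ, hσx, mul_inv_cancel_right]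
  · intro x
    show σ (x * (c x)⁻¹) = x
    have h2 : c ((c x)⁻¹) = 1 := hck _ (by rw [map_inv, hπc, inv_one])
    rw [hσx, hmul, h2, mul_one, inv_mul_cancel_right]

theorem statement5 {α : Type*} [Finite α] (m : ℕ) (hm : 1 ≤ m)
    (π : (FreeGroup α ⧸ Subgroup.lowerCentralSeries (⊤ : Subgroup (FreeGroup α)) m) →*
         (FreeGroup α ⧸ Subgroup.lowerCentralSeries (⊤ : Subgroup (FreeGroup α)) (m - 1)))
    (hπ : ∀ x : FreeGroup α, π (QuotientGroup.mk x) = QuotientGroup.mk x)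
    (ψ : (FreeGroup α ⧸ Subgroup.lowerCentralSeries (⊤ : Subgroup (FreeGroup α)) (m - 1)) ≃*
         (FreeGroup α ⧸ Subgroup.lowerCentralSeries (⊤ : Subgroup (FreeGroup α)) (m - 1))) :
    ∃ θ : (FreeGroup α ⧸ Subgroup.lowerCentralSeries (⊤ : Subgroup (FreeGroup α)) m) ≃*
          (FreeGroup α ⧸ Subgroup.lowerCentralSeries (⊤ : Subgroup (FreeGroup α)) m),
      ∀ x : FreeGroup α ⧸ Subgroup.lowerCentralSeries (⊤ : Subgroup (FreeGroup α)) m, π (θ x) = ψ (π x) := by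
  set F := FreeGroup α with hF
  -- γ_m of the quotient is trivial
  have hbot : Subgroup.lowerCentralSeries (⊤ : Subgroup (F ⧸ Subgroup.lowerCentralSeries (⊤ : Subgroup F) m)) m = ⊥ := by
    rw [← lcs_map_eq (QuotientGroup.mk' (Subgroup.lowerCentralSeries (⊤ : Subgroup F) m)) QuotientGroup.mk_surjective m,
      Subgroup.map_eq_bot_iff, QuotientGroup.ker_mk']
  -- lifting any endomorphism of the smaller quotient
  have lift : ∀ ψ' : (F ⧸ Subgroup.lowerCentralSeries (⊤ : Subgroup F) (m - 1)) →* (F ⧸ Subgroup.lowerCentralSeries (⊤ : Subgroup F) (m - 1)),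
      ∃ θ' : (F ⧸ Subgroup.lowerCentralSeries (⊤ : Subgroup F) m) →* (F ⧸ Subgroup.lowerCentralSeries (⊤ : Subgroup F) m),
        ∀ y, π (θ' y) = ψ' (π y) := by
    intro ψ'
    choose w hw using fun a : α =>
      QuotientGroup.mk_surjective (ψ' (QuotientGroup.mk (FreeGroup.of a)))
    set f : F →* (F ⧸ Subgroup.lowerCentralSeries (⊤ : Subgroup F) m) :=
      FreeGroup.lift (fun a => (QuotientGroup.mk (w a) : F ⧸ Subgroup.lowerCentralSeries (⊤ : Subgroup F) m)) with hf0
    have hf : ∀ x : F, π (f x) = ψ' (QuotientGroup.mk x) := by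
      intro x
      have h : π.comp f = ψ'.comp (QuotientGroup.mk' (Subgroup.lowerCentralSeries (⊤ : Subgroup F) (m - 1))) := by
        apply FreeGroup.ext_hom
        intro a
        simp only [MonoidHom.comp_apply, hf0, FreeGroup.lift_apply_of, QuotientGroup.mk'_apply]
        rw [hπ, hw a]
      exact DFunLike.congr_fun h x
    have hk : Subgroup.lowerCentralSeries (⊤ : Subgroup F) m ≤ f.ker := by
      intro x hx
      have h1 : f x ∈ Subgroup.map f (Subgroup.lowerCentralSeries (⊤ : Subgroup F) m) := ⟨x, hx, rfl⟩
      have h2 := Subgroup.lowerCentralSeries.map f m h1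
      rw [hbot] at h2
      simpa [MonoidHom.mem_ker] using h2
    refine ⟨QuotientGroup.lift _ f hk, ?_⟩
    intro y
    obtain ⟨x, rfl⟩ := QuotientGroup.mk_surjective y
    rw [hπ, QuotientGroup.lift_mk', hf]
  obtain ⟨θ₀, hθ₀⟩ := lift ψ.toMonoidHom
  obtain ⟨θ₁, hθ₁⟩ := lift ψ.symm.toMonoidHom
  rcases m with _ | n
  · exact absurd hm (by norm_num)
  rcases n with _ | k
  · -- m = 1 : the target is trivial
    haveI : Subsingleton (F ⧸ Subgroup.lowerCentralSeries (⊤ : Subgroup F) (0 + 1 - 1)) :=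
      QuotientGroup.subsingleton_quotient_top
    exact ⟨MulEquiv.refl _, fun x => Subsingleton.elim _ _⟩
  -- m = k + 2
  have hker_mem : ∀ y : F ⧸ Subgroup.lowerCentralSeries (⊤ : Subgroup F) (k + 2), π y = 1 →
      y ∈ Subgroup.lowerCentralSeries (⊤ : Subgroup (F ⧸ Subgroup.lowerCentralSeries (⊤ : Subgroup F) (k + 2))) (k + 1) := by
    intro y hy
    obtain ⟨x, rfl⟩ := QuotientGroup.mk_surjective y
    rw [hπ] at hy
    have hx : x ∈ Subgroup.lowerCentralSeries (⊤ : Subgroup F) (k + 1) := (QuotientGroup.eq_one_iff x).mp hy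
    exact Subgroup.lowerCentralSeries.map (QuotientGroup.mk' _) (k + 1) ⟨x, hx, rfl⟩
  have hcent : ∀ y : F ⧸ Subgroup.lowerCentralSeries (⊤ : Subgroup F) (k + 2), π y = 1 →
      ∀ g, Commute y g := by
    intro y hy g
    rw [← commutatorElement_eq_one_iff_commute]
    have h1 : ⁅y, g⁆ ∈ ⁅Subgroup.lowerCentralSeries (⊤ : Subgroup (F ⧸ Subgroup.lowerCentralSeries (⊤ : Subgroup F) (k + 2))) (k + 1),
        (⊤ : Subgroup (F ⧸ Subgroup.lowerCentralSeries (⊤ : Subgroup F) (k + 2)))⁆ :=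
      Subgroup.commutator_mem_commutator (hker_mem y hy) (Subgroup.mem_top g)
    have h2 : ⁅Subgroup.lowerCentralSeries (⊤ : Subgroup (F ⧸ Subgroup.lowerCentralSeries (⊤ : Subgroup F) (k + 2))) (k + 1),
        (⊤ : Subgroup (F ⧸ Subgroup.lowerCentralSeries (⊤ : Subgroup F) (k + 2)))⁆
        = Subgroup.lowerCentralSeries (⊤ : Subgroup (F ⧸ Subgroup.lowerCentralSeries (⊤ : Subgroup F) (k + 2))) (k + 2) := rfl
    rw [h2, hbot] at h1
    exact Subgroup.mem_bot.mp h1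
  have hkerc : ∀ y : F ⧸ Subgroup.lowerCentralSeries (⊤ : Subgroup F) (k + 2), π y = 1 →
      y ∈ commutator (F ⧸ Subgroup.lowerCentralSeries (⊤ : Subgroup F) (k + 2)) := by
    intro y hy
    have hle : Subgroup.lowerCentralSeries (⊤ : Subgroup (F ⧸ Subgroup.lowerCentralSeries (⊤ : Subgroup F) (k + 2))) (k + 1) ≤
        Subgroup.lowerCentralSeries (⊤ : Subgroup (F ⧸ Subgroup.lowerCentralSeries (⊤ : Subgroup F) (k + 2))) 1 :=
      Subgroup.lowerCentralSeries_antitone ⊤ (by omega)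
    exact Subgroup.top_lowerCentralSeries_one (G := F ⧸ Subgroup.lowerCentralSeries (⊤ : Subgroup F) (k + 2)) ▸ hle (hker_mem y hy)
  have bij₁ := sigma_bijective π (θ₁.comp θ₀)
    (fun y => by
      simp only [MonoidHom.comp_apply, hθ₁, hθ₀]
      exact ψ.symm_apply_apply _) hcent hkerc
  have bij₂ := sigma_bijective π (θ₀.comp θ₁)
    (fun y => by
      simp only [MonoidHom.comp_apply, hθ₀, hθ₁]
      exact ψ.apply_symm_apply _) hcent hkerc
  have hbij : Function.Bijective θ₀ := by
    constructor
    · intro a b h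
      exact bij₁.1 (by simp only [MonoidHom.comp_apply, h])
    · intro y
      obtain ⟨x, hx⟩ := bij₂.2 y
      exact ⟨θ₁ x, hx⟩
  exact ⟨MulEquiv.ofBijective θ₀ hbij, fun x => hθ₀ x⟩
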